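/- arXiv:1103.5571 — 2 statements merged into one kernel-verified Lean document; each statement's English description precedes it below -/
import Mathlib

section
/- The group G_ee with presentation ⟨x, y | x y x y⁻¹ x⁻¹ y x y x⁻¹ y⁻¹⟩ and the group G_oo with presentation ⟨x, y | x y x y x⁻¹ y⁻¹ x y⁻¹ x⁻¹ y⁻¹⟩ are not isomorphic as groups. -/
open FreeGroup

/-- The generator `x` of the free group on two generators. -/
def x : FreeGroup (Fin 2) := FreeGroup.of 0

/-- The generator `y` of the free group on two generators. -/
def y : FreeGroup (Fin 2) := FreeGroup.of 1

/-- The relator `r_ee`. -/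
def r_ee : FreeGroup (Fin 2) := x * y * x * y⁻¹ * x⁻¹ * y * x * y * x⁻¹ * y⁻¹

/-- The relator `r_oo`. -/
def r_oo : FreeGroup (Fin 2) := x * y * x * y * x⁻¹ * y⁻¹ * x * y⁻¹ * x⁻¹ * y⁻¹

/-- The group `G_ee` presented with the single relator `r_ee`. -/
def G_ee : Type := PresentedGroup ({r_ee} : Set (FreeGroup (Fin 2)))

/-- The group `G_oo` presented with the single relator `r_oo`. -/
def G_oo : Type := PresentedGroup ({r_oo} : Set (FreeGroup (Fin 2)))

noncomputable instance : Group G_ee := by unfold G_ee; infer_instance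

noncomputable instance : Group G_oo := by unfold G_oo; infer_instance

/-! ### A finite group of order 21 distinguishing the two presentations -/

/-- The nonabelian group of order 21, as `ZMod 7 ⋊ ZMod 3` with the generator of `ZMod 3`
acting by multiplication by `2`. -/
def F21 : Type := ZMod 7 × ZMod 3

namespace F21
instance : DecidableEq F21 := instDecidableEqProd (α := ZMod 7) (β := ZMod 3)
instance : Fintype F21 := instFintypeProd (ZMod 7) (ZMod 3)
instance : Mul F21 := ⟨fun p q => (p.1 + 2 ^ (p.2.val) * q.1, p.2 + q.2)⟩
instance : One F21 := ⟨((0 : ZMod 7), (0 : ZMod 3))⟩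
instance : Inv F21 := ⟨fun p => (-(2 ^ ((-p.2).val)) * p.1, -p.2)⟩

lemma key : ∀ (a b : ZMod 3), (2 : ZMod 7) ^ ((a + b).val) = 2 ^ a.val * 2 ^ b.val := by decide

instance : Group F21 := Group.ofLeftAxioms
  (by
    rintro ⟨a1, a2⟩ ⟨b1, b2⟩ ⟨c1, c2⟩
    show ((a1 + 2 ^ a2.val * b1) + 2 ^ ((a2 + b2).val) * c1, (a2 + b2) + c2)
        = (a1 + 2 ^ a2.val * (b1 + 2 ^ b2.val * c1), a2 + (b2 + c2))
    rw [key, Prod.mk.injEq]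
    exact ⟨by ring, add_assoc _ _ _⟩)
  (by
    rintro ⟨a1, a2⟩
    show ((0 : ZMod 7) + 2 ^ ((0 : ZMod 3)).val * a1, 0 + a2) = (a1, a2)
    simp)
  (by
    rintro ⟨a1, a2⟩
    show (-(2 ^ ((-a2).val)) * a1 + 2 ^ ((-a2).val) * a1, -a2 + a2) = ((0 : ZMod 7), (0 : ZMod 3))
    rw [Prod.mk.injEq]
    exact ⟨by ring, neg_add_cancel _⟩)
end F21

/-- The relator equation `r_ee` evaluated at a pair of elements of `F21`. -/
def Pee (a b : F21) : Prop := a * b * a * b⁻¹ * a⁻¹ * b * a * b * a⁻¹ * b⁻¹ = 1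

/-- The relator equation `r_oo` evaluated at a pair of elements of `F21`. -/
def Poo (a b : F21) : Prop := a * b * a * b * a⁻¹ * b⁻¹ * a * b⁻¹ * a⁻¹ * b⁻¹ = 1

instance : DecidablePred (fun p : F21 × F21 => Pee p.1 p.2) :=
  fun _ => by unfold Pee; infer_instance
instance : DecidablePred (fun p : F21 × F21 => Poo p.1 p.2) :=
  fun _ => by unfold Poo; infer_instance

set_option maxRecDepth 100000 in
set_option maxHeartbeats 4000000 in
lemma cardPee : Fintype.card {p : F21 × F21 // Pee p.1 p.2} = 21 := by decide

set_option maxRecDepth 100000 in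
set_option maxHeartbeats 4000000 in
lemma cardPoo : Fintype.card {p : F21 × F21 // Poo p.1 p.2} = 63 := by decide

/-- Homs out of a presented group correspond to functions killing the relators. -/
def homEquiv {β : Type*} (rels : Set (FreeGroup β)) (G : Type*) [Group G] :
    (PresentedGroup rels →* G) ≃ {f : β → G // ∀ r ∈ rels, FreeGroup.lift f r = 1} where
  toFun φ := ⟨fun b => φ (PresentedGroup.of b), by
    intro r hr
    have h2 : (FreeGroup.lift (fun b => φ (PresentedGroup.of b)))
        = φ.comp (PresentedGroup.mk rels) := by
      ext b
      simp [PresentedGroup.of]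
    have h3 : (PresentedGroup.mk rels) r = 1 :=
      (QuotientGroup.eq_one_iff r).mpr (Subgroup.subset_normalClosure hr)
    rw [h2, MonoidHom.comp_apply, h3]; exact φ.map_one⟩
  invFun f := PresentedGroup.toGroup f.2
  left_inv φ := MonoidHom.ext fun z => (PresentedGroup.toGroup.unique _ φ (fun _ => rfl)).symm
  right_inv f := Subtype.ext (funext fun b => PresentedGroup.toGroup.of f.2)

lemma lift_ee (g : Fin 2 → F21) :
    FreeGroup.lift g r_ee
      = g 0 * g 1 * g 0 * (g 1)⁻¹ * (g 0)⁻¹ * g 1 * g 0 * g 1 * (g 0)⁻¹ * (g 1)⁻¹ := by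
  simp [r_ee, x, y]

lemma lift_oo (g : Fin 2 → F21) :
    FreeGroup.lift g r_oo
      = g 0 * g 1 * g 0 * g 1 * (g 0)⁻¹ * (g 1)⁻¹ * g 0 * (g 1)⁻¹ * (g 0)⁻¹ * (g 1)⁻¹ := by
  simp [r_oo, x, y]

/-- Functions killing `r_ee` correspond to pairs satisfying `Pee`. -/
def solEquivEe :
    {f : Fin 2 → F21 // ∀ r ∈ ({r_ee} : Set (FreeGroup (Fin 2))), FreeGroup.lift f r = 1}
      ≃ {p : F21 × F21 // Pee p.1 p.2} where
  toFun f := ⟨(f.1 0, f.1 1), by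
    have := f.2 r_ee rfl
    rw [lift_ee] at this
    exact this⟩
  invFun p := ⟨![p.1.1, p.1.2], by
    intro r hr
    rw [Set.eq_of_mem_singleton hr, lift_ee]
    exact p.2⟩
  left_inv f := Subtype.ext (funext fun i => by fin_cases i <;> rfl)
  right_inv p := rfl

/-- Functions killing `r_oo` correspond to pairs satisfying `Poo`. -/
def solEquivOo :
    {f : Fin 2 → F21 // ∀ r ∈ ({r_oo} : Set (FreeGroup (Fin 2))), FreeGroup.lift f r = 1}
      ≃ {p : F21 × F21 // Poo p.1 p.2} where
  toFun f := ⟨(f.1 0, f.1 1), by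
    have := f.2 r_oo rfl
    rw [lift_oo] at this
    exact this⟩
  invFun p := ⟨![p.1.1, p.1.2], by
    intro r hr
    rw [Set.eq_of_mem_singleton hr, lift_oo]
    exact p.2⟩
  left_inv f := Subtype.ext (funext fun i => by fin_cases i <;> rfl)
  right_inv p := rfl

theorem G_ee_not_iso_G_oo : ¬ Nonempty (G_ee ≃* G_oo) := by
  rintro ⟨e⟩
  have e' : PresentedGroup ({r_ee} : Set (FreeGroup (Fin 2)))
      ≃* PresentedGroup ({r_oo} : Set (FreeGroup (Fin 2))) := e
  have compEquiv : (PresentedGroup ({r_oo} : Set (FreeGroup (Fin 2))) →* F21)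
      ≃ (PresentedGroup ({r_ee} : Set (FreeGroup (Fin 2))) →* F21) :=
    { toFun := fun φ => φ.comp e'.toMonoidHom
      invFun := fun φ => φ.comp e'.symm.toMonoidHom
      left_inv := fun φ => by ext g; simp
      right_inv := fun φ => by ext g; simp }
  have E : {p : F21 × F21 // Poo p.1 p.2} ≃ {p : F21 × F21 // Pee p.1 p.2} :=
    (solEquivOo.symm.trans ((homEquiv _ F21).symm.trans
      (compEquiv.trans ((homEquiv _ F21).trans solEquivEe))))
  have hc := Fintype.card_congr E
  rw [cardPee, cardPoo] at hc
  exact absurd hc (by norm_num)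
end

section
/- The group G_ee with presentation ⟨x, y | x y x y⁻¹ x⁻¹ y x y x⁻¹ y⁻¹⟩ and the group G_oe with presentation ⟨x, y | x y x y⁻¹ x⁻¹ y⁻¹ x y x⁻¹ y⁻¹⟩ are not isomorphic as groups. -/
open FreeGroup

/-- The relator `r_oe`. -/
def r_oe : FreeGroup (Fin 2) := x * y * x * y⁻¹ * x⁻¹ * y⁻¹ * x * y * x⁻¹ * y⁻¹

/-- The group `G_oe` presented with the single relator `r_oe`. -/
def G_oe : Type := PresentedGroup ({r_oe} : Set (FreeGroup (Fin 2)))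

noncomputable instance : Group G_oe := by unfold G_oe; infer_instance

section Aux

/-- The type of pairs in `S` satisfying the relator equation given by `r`. -/
def sol (r : FreeGroup (Fin 2)) (S : Type) [Group S] : Type :=
  {p : S × S // FreeGroup.lift (fun i => if i = 0 then p.1 else p.2) r = 1}

lemma relator_eq_one (rels : Set (FreeGroup (Fin 2))) {r : FreeGroup (Fin 2)} (hr : r ∈ rels) :
    FreeGroup.lift (fun i => (PresentedGroup.of i : PresentedGroup rels)) r = 1 := by
  have h1 : (FreeGroup.lift (fun i => (PresentedGroup.of i : PresentedGroup rels)))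
      = (QuotientGroup.mk' (Subgroup.normalClosure rels)) := by
    apply FreeGroup.ext_hom
    intro i
    rfl
  rw [h1]
  exact (QuotientGroup.eq_one_iff r).mpr (Subgroup.subset_normalClosure hr)

lemma lift_of_hom {S : Type} [Group S] (r : FreeGroup (Fin 2))
    (φ : PresentedGroup ({r} : Set (FreeGroup (Fin 2))) →* S) :
    FreeGroup.lift (fun i => φ (PresentedGroup.of i)) r = 1 := by
  have hcomp : FreeGroup.lift (fun i => φ (PresentedGroup.of i))
      = φ.comp (FreeGroup.lift (fun i => (PresentedGroup.of i :
          PresentedGroup ({r} : Set (FreeGroup (Fin 2)))))) := by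
    apply FreeGroup.ext_hom; intro i
    simp [FreeGroup.lift_apply_of]
  have h3 := DFunLike.congr_fun hcomp r
  rw [h3, MonoidHom.comp_apply,
    relator_eq_one ({r} : Set (FreeGroup (Fin 2))) (Set.mem_singleton r)]
  exact map_one φ

/-- Homomorphisms out of a one-relator presented group correspond to solutions. -/
noncomputable def homEquivSol (r : FreeGroup (Fin 2)) (S : Type) [Group S] :
    (PresentedGroup ({r} : Set (FreeGroup (Fin 2))) →* S) ≃ sol r S where
  toFun φ := ⟨(φ (PresentedGroup.of 0), φ (PresentedGroup.of 1)), by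
    have h2 : (fun i : Fin 2 => if i = 0 then φ (PresentedGroup.of 0) else φ (PresentedGroup.of 1))
        = fun i => φ (PresentedGroup.of i) := by
      funext i
      fin_cases i <;> simp
    rw [h2]
    exact lift_of_hom r φ⟩
  invFun p := PresentedGroup.toGroup (f := fun i => if i = 0 then p.1.1 else p.1.2)
    (by intro s hs; rw [Set.mem_singleton_iff] at hs; subst hs; exact p.2)
  left_inv φ := by
    symm
    apply MonoidHom.ext
    intro a
    apply PresentedGroup.toGroup.unique
    intro i
    fin_cases i <;> simp
  right_inv p := by
    apply Subtype.ext
    apply Prod.ext <;> simp [PresentedGroup.toGroup.of]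

noncomputable instance (r : FreeGroup (Fin 2)) (S : Type) [Group S] [Fintype S] [DecidableEq S] :
    Fintype (sol r S) := by
  unfold sol
  classical
  infer_instance

end Aux

abbrev S4 := Equiv.Perm (Fin 4)

noncomputable def sol_ee_equiv : sol r_ee S4 ≃
    {p : S4 × S4 // p.1*p.2*p.1*p.2⁻¹*p.1⁻¹*p.2*p.1*p.2*p.1⁻¹*p.2⁻¹ = 1} := by
  apply Equiv.subtypeEquivRight
  intro p
  simp [r_ee, x, y]

noncomputable def sol_oe_equiv : sol r_oe S4 ≃
    {p : S4 × S4 // p.1*p.2*p.1*p.2⁻¹*p.1⁻¹*p.2⁻¹*p.1*p.2*p.1⁻¹*p.2⁻¹ = 1} := by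
  apply Equiv.subtypeEquivRight
  intro p
  simp [r_oe, x, y]

set_option maxRecDepth 10000 in
lemma card_ee : Fintype.card
    {p : S4 × S4 // p.1*p.2*p.1*p.2⁻¹*p.1⁻¹*p.2*p.1*p.2*p.1⁻¹*p.2⁻¹ = 1} = 48 := by decide

set_option maxRecDepth 10000 in
lemma card_oe : Fintype.card
    {p : S4 × S4 // p.1*p.2*p.1*p.2⁻¹*p.1⁻¹*p.2⁻¹*p.1*p.2*p.1⁻¹*p.2⁻¹ = 1} = 24 := by decide

theorem G_ee_not_iso_G_oe : ¬ Nonempty (G_ee ≃* G_oe) := by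
  rintro ⟨e⟩
  have homEquiv : (G_oe →* S4) ≃ (G_ee →* S4) :=
    { toFun := fun φ => φ.comp e.toMonoidHom
      invFun := fun φ => φ.comp e.symm.toMonoidHom
      left_inv := fun φ => by ext a; simp
      right_inv := fun φ => by ext a; simp }
  have key : sol r_oe S4 ≃ sol r_ee S4 :=
    ((homEquivSol r_oe S4).symm.trans homEquiv).trans (homEquivSol r_ee S4)
  have hcard := Fintype.card_congr ((sol_oe_equiv.symm.trans key).trans sol_ee_equiv)
  rw [card_ee, card_oe] at hcard
  omega
end
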